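/- Let a < b be integers and g(x) := x - a on [a,b]. For the univariate NN operator F_n with n ∈ ℕ⁺, one has F_n(g, a) - g(a) ≥ φ_σ(1)/n > 0. Consequently ‖F_n(g,·) - g‖_∞ ≥ φ_σ(1)·ω(g, 1/n), where ω(g, 1/n) = 1/n, so the global approximation rate O(1/n) cannot be improved for Lipschitz functions. -/

import Mathlib

open Filter

theorem NN_saturation_lower_bound
    (σ : ℝ → ℝ) (α : ℝ) (hα : 0 < α)
    (hmono : Monotone σ)
    (h0 : Tendsto σ atBot (nhds 0))
    (h1 : Tendsto σ atTop (nhds 1))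
    (hodd : ∀ x : ℝ, σ (-x) - 1/2 = -(σ x - 1/2))
    (hdecay : σ =O[atBot] fun x : ℝ => |x| ^ (-1 - α))
    (φ : ℝ → ℝ) (hφ : ∀ x : ℝ, φ x = (1/2) * (σ (x + 1) - σ (x - 1)))
    (hφ1 : 0 < φ 1)
    (a b : ℤ) (hab : a < b)
    (g : ℝ → ℝ) (hg : ∀ x : ℝ, g x = x - a)
    (n : ℕ) (hn : 0 < n)
    (F : ℝ → ℝ)
    (hF : ∀ x : ℝ, F x =
      (∑ k ∈ Finset.Icc ((n : ℤ) * a) ((n : ℤ) * b), g ((k : ℝ) / n) * φ ((n : ℝ) * x - k)) /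
      (∑ k ∈ Finset.Icc ((n : ℤ) * a) ((n : ℤ) * b), φ ((n : ℝ) * x - k))) :
    (0 < φ 1 / n ∧ φ 1 / n ≤ F (a : ℝ) - g (a : ℝ)) ∧
    ∀ C : ℝ, (∀ x ∈ Set.Icc (a : ℝ) (b : ℝ), |F x - g x| ≤ C) → φ 1 * (1 / n) ≤ C := by
  have hnR : (0 : ℝ) < n := by exact_mod_cast hn
  -- basic facts about σ
  have hσ0 : σ 0 = 1/2 := by have := hodd 0; simp at this; linarith
  have hσle : ∀ x, σ x ≤ 1 := fun x => hmono.ge_of_tendsto h1 x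
  have hσge : ∀ x, 0 ≤ σ x := fun x => hmono.le_of_tendsto h0 x
  have hφnn : ∀ x, 0 ≤ φ x := by
    intro x; rw [hφ]
    have := hmono (by linarith : x - 1 ≤ x + 1); linarith
  have hφeven1 : φ (-1) = φ 1 := by
    have h2 := hodd 2
    rw [hφ, hφ]
    norm_num
    linarith [hσ0]
  -- membership of the special index
  have hmem : (n : ℤ) * a + 1 ∈ Finset.Icc ((n : ℤ) * a) ((n : ℤ) * b) := by
    rw [Finset.mem_Icc]
    constructor
    · linarith
    · have : (n : ℤ) * a + n ≤ (n : ℤ) * b := by nlinarith [hab, (by exact_mod_cast hn : (0:ℤ) < (n:ℤ))]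
      have hn1 : (1 : ℤ) ≤ n := by exact_mod_cast hn
      linarith
  -- reindexing
  set M : ℕ := ((n : ℤ) * (b - a)).toNat with hM
  have hMval : ((M : ℤ)) = (n : ℤ) * (b - a) := by
    rw [hM, Int.toNat_of_nonneg]
    exact mul_nonneg (Int.natCast_nonneg n) (by omega)
  have hAB : (n : ℤ) * b = (n : ℤ) * a + M := by rw [hMval]; ring
  have hreindex : ∀ f : ℤ → ℝ,
      ∑ k ∈ Finset.Icc ((n : ℤ) * a) ((n : ℤ) * b), f k
        = ∑ i ∈ Finset.range (M + 1), f ((n : ℤ) * a + i) := by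
    intro f
    refine Finset.sum_nbij' (i := fun k => (k - (n : ℤ) * a).toNat)
      (j := fun i => (n : ℤ) * a + i) ?_ ?_ ?_ ?_ ?_ <;>
      simp only [Finset.mem_Icc, Finset.mem_range]
    · intro k hk
      omega
    · intro i hi
      omega
    · intro k hk
      omega
    · intro i hi
      omega
    · intro k hk
      congr 1
      omega
  -- the denominator
  set D : ℝ := ∑ k ∈ Finset.Icc ((n : ℤ) * a) ((n : ℤ) * b), φ ((n : ℝ) * (a : ℝ) - k) with hD
  set N : ℝ := ∑ k ∈ Finset.Icc ((n : ℤ) * a) ((n : ℤ) * b),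
      g ((k : ℝ) / n) * φ ((n : ℝ) * (a : ℝ) - k) with hN
  have hterm : ∀ k ∈ Finset.Icc ((n : ℤ) * a) ((n : ℤ) * b),
      0 ≤ g ((k : ℝ) / n) * φ ((n : ℝ) * (a : ℝ) - k) := by
    intro k hk
    rw [Finset.mem_Icc] at hk
    apply mul_nonneg _ (hφnn _)
    rw [hg]
    have : ((n : ℤ) * a : ℝ) ≤ (k : ℝ) := by exact_mod_cast hk.1
    push_cast at this
    rw [sub_nonneg, le_div_iff₀ hnR]
    linarith
  have hval : g (((((n : ℤ) * a + 1) : ℤ) : ℝ) / n) * φ ((n : ℝ) * (a : ℝ) - (((n : ℤ) * a + 1 : ℤ) : ℝ))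
      = (1 / n) * φ 1 := by
    rw [hg]
    have e1 : ((((n : ℤ) * a + 1) : ℤ) : ℝ) = (n : ℝ) * (a : ℝ) + 1 := by push_cast; ring
    rw [e1]
    have e2 : (n : ℝ) * (a : ℝ) - ((n : ℝ) * (a : ℝ) + 1) = -1 := by ring
    rw [e2, hφeven1]
    field_simp
    ring
  have hNlb : (1 / n) * φ 1 ≤ N := by
    rw [hN, ← hval]
    exact Finset.single_le_sum hterm hmem
  have hDpos : 0 < D := by
    have h1t : φ ((n : ℝ) * (a : ℝ) - (((n : ℤ) * a + 1 : ℤ) : ℝ)) = φ 1 := by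
      have e1 : ((((n : ℤ) * a + 1) : ℤ) : ℝ) = (n : ℝ) * (a : ℝ) + 1 := by push_cast; ring
      rw [e1]
      have e2 : (n : ℝ) * (a : ℝ) - ((n : ℝ) * (a : ℝ) + 1) = -1 := by ring
      rw [e2, hφeven1]
    calc (0 : ℝ) < φ 1 := hφ1
      _ = φ ((n : ℝ) * (a : ℝ) - (((n : ℤ) * a + 1 : ℤ) : ℝ)) := h1t.symm
      _ ≤ D := Finset.single_le_sum (f := fun k : ℤ => φ ((n : ℝ) * (a : ℝ) - (k : ℝ))) (fun k _ => hφnn _) hmem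
  -- D ≤ 1 via telescoping
  have hDle : D ≤ 1 := by
    have hDre : D = ∑ i ∈ Finset.range (M + 1), φ ((n : ℝ) * (a : ℝ) - (((n : ℤ) * a + i : ℤ) : ℝ)) :=
      hreindex (fun k => φ ((n : ℝ) * (a : ℝ) - (k : ℝ)))
    set ψ : ℕ → ℝ := fun i => (1/2) * σ (1 - (i : ℝ)) with hψ
    have hφψ : ∀ i : ℕ, φ ((n : ℝ) * (a : ℝ) - (((n : ℤ) * a + i : ℤ) : ℝ))
        = (ψ i - ψ (i + 1)) + (ψ (i + 1) - ψ (i + 2)) := by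
      intro i
      have e1 : (n : ℝ) * (a : ℝ) - (((n : ℤ) * a + i : ℤ) : ℝ) = -(i : ℝ) := by push_cast; ring
      rw [e1, hφ, hψ]
      push_cast
      ring_nf
    rw [hDre]
    have : ∑ i ∈ Finset.range (M + 1), φ ((n : ℝ) * (a : ℝ) - (((n : ℤ) * a + i : ℤ) : ℝ))
        = (ψ 0 - ψ (M + 1)) + (ψ 1 - ψ (M + 2)) := by
      calc ∑ i ∈ Finset.range (M + 1), φ ((n : ℝ) * (a : ℝ) - (((n : ℤ) * a + i : ℤ) : ℝ))
          = ∑ i ∈ Finset.range (M + 1), ((ψ i - ψ (i + 1)) + (ψ (i + 1) - ψ (i + 2))) := by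
            exact Finset.sum_congr rfl (fun i _ => hφψ i)
        _ = (∑ i ∈ Finset.range (M + 1), (ψ i - ψ (i + 1)))
            + ∑ i ∈ Finset.range (M + 1), ((fun j => ψ (j + 1)) i - (fun j => ψ (j + 1)) (i + 1)) := by
            rw [← Finset.sum_add_distrib]
        _ = (ψ 0 - ψ (M + 1)) + (ψ 1 - ψ (M + 2)) := by
            rw [Finset.sum_range_sub' ψ, Finset.sum_range_sub' (fun j => ψ (j + 1))]
    rw [this]
    have hψ0 : ψ 0 ≤ 1/2 := by
      rw [hψ]; simp only; norm_num; linarith [hσle 1]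
    have hψ1 : ψ 1 ≤ 1/2 := by
      rw [hψ]; simp only; norm_num; linarith [hσle 0]
    have hψnn : ∀ i, 0 ≤ ψ i := fun i => by
      rw [hψ]; simp only; linarith [hσge (1 - (i:ℝ))]
    linarith [hψnn (M + 1), hψnn (M + 2)]
  -- F a - g a
  have hga : g (a : ℝ) = 0 := by rw [hg]; ring
  have hFa : F (a : ℝ) = N / D := by rw [hF, hN, hD]
  have hmain : φ 1 / n ≤ F (a : ℝ) - g (a : ℝ) := by
    rw [hga, hFa, sub_zero, le_div_iff₀ hDpos]
    have h1' : φ 1 / n * D ≤ φ 1 / n * 1 := by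
      apply mul_le_mul_of_nonneg_left hDle
      positivity
    calc φ 1 / n * D ≤ φ 1 / n * 1 := h1'
      _ = (1 / n) * φ 1 := by ring
      _ ≤ N := hNlb
  have hpos : 0 < φ 1 / n := by positivity
  refine ⟨⟨hpos, hmain⟩, ?_⟩
  intro C hC
  have hamem : (a : ℝ) ∈ Set.Icc (a : ℝ) (b : ℝ) := by
    constructor
    · exact le_refl (a : ℝ)
    · exact_mod_cast hab.le
  have := hC (a : ℝ) hamem
  calc φ 1 * (1 / n) = φ 1 / n := by ring
    _ ≤ F (a : ℝ) - g (a : ℝ) := hmain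
    _ ≤ |F (a : ℝ) - g (a : ℝ)| := le_abs_self _
    _ ≤ C := this
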